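/- Let W ∈ ℝ^{n×n} be symmetric with nonnegative entries and zero diagonal, and let p_1,...,p_n ∈ [0,1] be independent Bernoulli parameters for cluster membership. Then the expected contribution of this cluster to the ratio-cut satisfies RC(p) := (1/2) Σ_{i,j} W_{ij}(p_i + p_j - 2 p_i p_j) ∫_0^1 Π_{m ≠ i,j} (1 - p_m t) dt ≤ (e^2/(2n)) · (1/p̄) · Σ_{i,j} W_{ij}(p_i + p_j - 2 p_i p_j), provided p̄ = (1/n)Σ_i p_i > 0. -/

import Mathlib

open Finset

lemma rc_integral_exp (S : ℝ) (hS : 0 < S) :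
    ∫ t in (0:ℝ)..1, Real.exp (-S * t) = (1 - Real.exp (-S)) / S := by
  have h : ∀ t ∈ Set.uIcc (0:ℝ) 1,
      HasDerivAt (fun t : ℝ => -Real.exp (-S * t) / S) (Real.exp (-S * t)) t := by
    intro t _
    have h1 : HasDerivAt (fun t : ℝ => -S * t) (-S) t := by
      simpa using (hasDerivAt_id t).const_mul (-S)
    have h2 := h1.exp
    have h3 := (h2.neg).div_const S
    convert h3 using 1
    · rfl
    · rfl
    · rfl
    · field_simp
  have := intervalIntegral.integral_eq_sub_of_hasDerivAt h
    (by apply Continuous.intervalIntegrable; continuity)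
  rw [this]
  simp only [mul_one, mul_zero, Real.exp_zero]
  ring

lemma rc_integral_bound (n : ℕ) (p : Fin n → ℝ) (hp : ∀ i, p i ∈ Set.Icc (0:ℝ) 1)
    (S : ℝ) (hS : S = ∑ i, p i) (hSpos : 0 < S) (i j : Fin n) :
    ∫ t in (0:ℝ)..1, ∏ m ∈ (Finset.univ \ {i, j}), (1 - p m * t) ≤ Real.exp 2 / S := by
  have hsum2 : ∑ m ∈ ({i,j} : Finset (Fin n)), p m ≤ 2 := by
    calc ∑ m ∈ ({i,j} : Finset (Fin n)), p m
        ≤ (({i,j} : Finset (Fin n)).card : ℝ) * 1 := by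
          simpa using Finset.sum_le_card_nsmul _ _ 1 (fun m _ => (hp m).2)
      _ ≤ 2 := by
          have : ({i,j} : Finset (Fin n)).card ≤ 2 := Finset.card_insert_le i {j}
          have : (({i,j} : Finset (Fin n)).card : ℝ) ≤ 2 := by exact_mod_cast this
          linarith
  have hsum : S - 2 ≤ ∑ m ∈ (Finset.univ \ {i,j}), p m := by
    have h1 : ∑ m ∈ (Finset.univ \ {i,j} : Finset (Fin n)), p m
        = S - ∑ m ∈ ({i,j} : Finset (Fin n)), p m := by
      rw [hS, Finset.sum_sdiff_eq_sub (Finset.subset_univ _)]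
    linarith [h1]
  have hpt : ∀ t ∈ Set.Icc (0:ℝ) 1,
      ∏ m ∈ (Finset.univ \ {i,j}), (1 - p m * t) ≤ Real.exp 2 * Real.exp (-S * t) := by
    intro t ht
    obtain ⟨ht0, ht1⟩ := ht
    have step1 : ∏ m ∈ (Finset.univ \ {i,j}), (1 - p m * t)
        ≤ ∏ m ∈ (Finset.univ \ {i,j}), Real.exp (-(p m * t)) := by
      apply Finset.prod_le_prod
      · intro m _
        have h1 := (hp m).1
        have h2 := (hp m).2
        nlinarith
      · intro m _
        linarith [Real.add_one_le_exp (-(p m * t))]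
    have step2 : ∏ m ∈ (Finset.univ \ {i,j}), Real.exp (-(p m * t))
        = Real.exp (-(∑ m ∈ (Finset.univ \ {i,j}), p m) * t) := by
      rw [← Real.exp_sum]
      congr 1
      rw [← Finset.sum_neg_distrib, Finset.sum_mul]
      simp [neg_mul]
    have step3 : Real.exp (-(∑ m ∈ (Finset.univ \ {i,j}), p m) * t)
        ≤ Real.exp ((2 - S) * t) := by
      apply Real.exp_le_exp.mpr
      nlinarith
    have step4 : Real.exp ((2 - S) * t) ≤ Real.exp 2 * Real.exp (-S * t) := by
      rw [← Real.exp_add]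
      apply Real.exp_le_exp.mpr
      nlinarith [Real.exp_pos (-S * t)]
    calc ∏ m ∈ (Finset.univ \ {i,j}), (1 - p m * t)
        ≤ ∏ m ∈ (Finset.univ \ {i,j}), Real.exp (-(p m * t)) := step1
      _ = Real.exp (-(∑ m ∈ (Finset.univ \ {i,j}), p m) * t) := step2
      _ ≤ Real.exp ((2 - S) * t) := step3
      _ ≤ Real.exp 2 * Real.exp (-S * t) := step4
  have hmono : ∫ t in (0:ℝ)..1, ∏ m ∈ (Finset.univ \ {i,j}), (1 - p m * t)
      ≤ ∫ t in (0:ℝ)..1, Real.exp 2 * Real.exp (-S * t) := by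
    apply intervalIntegral.integral_mono_on (by norm_num)
    · apply Continuous.intervalIntegrable
      exact continuous_finset_prod _ (fun m _ => by continuity)
    · apply Continuous.intervalIntegrable; continuity
    · exact hpt
  have hint : ∫ t in (0:ℝ)..1, Real.exp 2 * Real.exp (-S * t)
      = Real.exp 2 * ((1 - Real.exp (-S)) / S) := by
    rw [intervalIntegral.integral_const_mul, rc_integral_exp S hSpos]
  have hfinal : Real.exp 2 * ((1 - Real.exp (-S)) / S) ≤ Real.exp 2 / S := by
    have h1 : (1 - Real.exp (-S)) / S ≤ 1 / S := by
      gcongr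
      linarith [Real.exp_pos (-S)]
    calc Real.exp 2 * ((1 - Real.exp (-S)) / S) ≤ Real.exp 2 * (1 / S) := by
          exact mul_le_mul_of_nonneg_left h1 (Real.exp_pos 2).le
      _ = Real.exp 2 / S := by ring
  linarith [hmono, hint.le, hint.ge]

/-- Upper bound on the expected ratio-cut contribution of one
cluster: RC(p) = (1/2)Σ_{i,j} W_{ij}(pᵢ+pⱼ-2pᵢpⱼ)∫_0^1 ∏_{m≠i,j}(1-p_m t)dt
≤ (e²/(2n))·(1/p̄)·Σ_{i,j} W_{ij}(pᵢ+pⱼ-2pᵢpⱼ). -/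
theorem rc_upper_bound (n : ℕ) (W : Matrix (Fin n) (Fin n) ℝ)
    (hW_symm : W.IsSymm) (hW_nonneg : ∀ i j, 0 ≤ W i j)
    (hW_diag : ∀ i, W i i = 0)
    (p : Fin n → ℝ) (hp : ∀ i, p i ∈ Set.Icc (0:ℝ) 1)
    (pbar : ℝ) (hmean : pbar = (1 / (n:ℝ)) * ∑ i, p i) (hpos : 0 < pbar) :
    (1/2 : ℝ) * ∑ i, ∑ j, W i j * (p i + p j - 2 * p i * p j) *
        ∫ t in (0:ℝ)..1, ∏ m ∈ (Finset.univ \ {i, j}), (1 - p m * t)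
      ≤ (Real.exp 2 / (2 * (n:ℝ))) * (1 / pbar) *
          ∑ i, ∑ j, W i j * (p i + p j - 2 * p i * p j) := by
  have hn : 0 < n := by
    by_contra h
    push_neg at h
    interval_cases n
    simp at hmean
    linarith [hmean ▸ hpos]
  have hnR : 0 < (n:ℝ) := by exact_mod_cast hn
  set S : ℝ := ∑ i, p i with hSdef
  have hSnp : S = (n:ℝ) * pbar := by
    rw [hmean]; field_simp
  have hSpos : 0 < S := by rw [hSnp]; positivity
  have ha : ∀ i j : Fin n, 0 ≤ W i j * (p i + p j - 2 * p i * p j) := by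
    intro i j
    apply mul_nonneg (hW_nonneg i j)
    have h1 := (hp i).1; have h2 := (hp i).2
    have h3 := (hp j).1; have h4 := (hp j).2
    nlinarith
  have hstep : ∑ i, ∑ j, W i j * (p i + p j - 2 * p i * p j) *
        ∫ t in (0:ℝ)..1, ∏ m ∈ (Finset.univ \ {i, j}), (1 - p m * t)
      ≤ ∑ i, ∑ j, W i j * (p i + p j - 2 * p i * p j) * (Real.exp 2 / S) := by
    apply Finset.sum_le_sum
    intro i _
    apply Finset.sum_le_sum
    intro j _
    exact mul_le_mul_of_nonneg_left (rc_integral_bound n p hp S rfl hSpos i j) (ha i j)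
  have hrw : ∑ i, ∑ j, W i j * (p i + p j - 2 * p i * p j) * (Real.exp 2 / S)
      = (∑ i, ∑ j, W i j * (p i + p j - 2 * p i * p j)) * (Real.exp 2 / S) := by
    rw [Finset.sum_mul]
    congr 1; ext i
    rw [Finset.sum_mul]
  have heq : (1/2 : ℝ) * ((∑ i, ∑ j, W i j * (p i + p j - 2 * p i * p j)) * (Real.exp 2 / S))
      = (Real.exp 2 / (2 * (n:ℝ))) * (1 / pbar) *
          ∑ i, ∑ j, W i j * (p i + p j - 2 * p i * p j) := by
    rw [hSnp]
    field_simp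
  calc (1/2 : ℝ) * ∑ i, ∑ j, W i j * (p i + p j - 2 * p i * p j) *
        ∫ t in (0:ℝ)..1, ∏ m ∈ (Finset.univ \ {i, j}), (1 - p m * t)
      ≤ (1/2 : ℝ) * ((∑ i, ∑ j, W i j * (p i + p j - 2 * p i * p j)) * (Real.exp 2 / S)) := by
        rw [← hrw]; linarith [hstep]
    _ = _ := heq
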